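/- In the fiber product ring R = ℤ ×_{ℤ/2ℤ} ℤ = {(a,b) ∈ ℤ × ℤ : a ≡ b mod 2}, the ideal 𝔠 = {(a,b) ∈ ℤ² : a,b ∈ 2ℤ} is not a principal ideal of R, and satisfies 𝔠² = (2,2)·𝔠. -/
import Mathlib


/-- The fiber product ring `ℤ ×_{ℤ/2ℤ} ℤ = {(a,b) ∈ ℤ × ℤ : a ≡ b mod 2}`,
as a subring of `ℤ × ℤ`. -/
def fiberProdSubring : Subring (ℤ × ℤ) where
  carrier := {p | 2 ∣ p.1 - p.2}
  zero_mem' := ⟨0, by simp⟩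
  one_mem' := ⟨0, by simp⟩
  add_mem' := by
    rintro ⟨a, b⟩ ⟨c, d⟩ ⟨k, hk⟩ ⟨m, hm⟩
    exact ⟨k + m, by simp only [Prod.mk_add_mk]; linarith⟩
  neg_mem' := by
    rintro ⟨a, b⟩ ⟨k, hk⟩
    exact ⟨-k, by simp only [Prod.neg_mk]; linarith⟩
  mul_mem' := by
    rintro ⟨a, b⟩ ⟨c, d⟩ ⟨k, hk⟩ ⟨m, hm⟩
    exact ⟨a * m + d * k, by simp only [Prod.mk_mul_mk]; linear_combination a * hm + d * hk⟩

/-- In the fiber product ring `R = ℤ ×_{ℤ/2ℤ} ℤ`, the ideal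
`𝔠 = {(a,b) ∈ ℤ² : a, b ∈ 2ℤ}` is not principal, and satisfies `𝔠² = (2,2)·𝔠`. -/
theorem stmt12 (𝔠 : Ideal fiberProdSubring)
    (h𝔠 : ∀ x : fiberProdSubring, x ∈ 𝔠 ↔ 2 ∣ (x : ℤ × ℤ).1 ∧ 2 ∣ (x : ℤ × ℤ).2) :
    ¬ 𝔠.IsPrincipal ∧
      𝔠 * 𝔠 = Ideal.span {(⟨(2, 2), ⟨0, by ring⟩⟩ : fiberProdSubring)} * 𝔠 := by
  set g2 : fiberProdSubring := ⟨(2, 2), ⟨0, by ring⟩⟩ with hg2def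
  constructor
  · rintro ⟨g, hg⟩
    set e20 : fiberProdSubring := ⟨(2, 0), ⟨1, by ring⟩⟩ with he20
    set e02 : fiberProdSubring := ⟨(0, 2), ⟨-1, by ring⟩⟩ with he02
    have h1 : e20 ∈ 𝔠 := (h𝔠 e20).2 ⟨⟨1, by norm_num⟩, ⟨0, by norm_num⟩⟩
    have h2 : e02 ∈ 𝔠 := (h𝔠 e02).2 ⟨⟨0, by norm_num⟩, ⟨1, by norm_num⟩⟩
    rw [hg, Submodule.mem_span_singleton] at h1 h2
    obtain ⟨r, hr⟩ := h1
    obtain ⟨s, hs⟩ := h2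
    rw [smul_eq_mul] at hr hs
    have hgmem : g ∈ 𝔠 := by rw [hg]; exact Ideal.mem_span_singleton_self g
    obtain ⟨⟨m, hm⟩, -⟩ := (h𝔠 g).1 hgmem
    have hr' : (r : ℤ × ℤ) * (g : ℤ × ℤ) = ((2, 0) : ℤ × ℤ) := congrArg Subtype.val hr
    have hs' : (s : ℤ × ℤ) * (g : ℤ × ℤ) = ((0, 2) : ℤ × ℤ) := congrArg Subtype.val hs
    have hr1 : (r : ℤ × ℤ).1 * (g : ℤ × ℤ).1 = 2 := congrArg Prod.fst hr'
    have hr2 : (r : ℤ × ℤ).2 * (g : ℤ × ℤ).2 = 0 := congrArg Prod.snd hr'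
    have hs2 : (s : ℤ × ℤ).2 * (g : ℤ × ℤ).2 = 2 := congrArg Prod.snd hs'
    have hg2ne : (g : ℤ × ℤ).2 ≠ 0 := by
      intro h
      rw [h, mul_zero] at hs2
      norm_num at hs2
    have hr2zero : (r : ℤ × ℤ).2 = 0 := by
      rcases mul_eq_zero.mp hr2 with h | h
      · exact h
      · exact absurd h hg2ne
    obtain ⟨k, hk⟩ := r.2
    rw [hr2zero, sub_zero] at hk
    have : (4 : ℤ) ∣ 2 := ⟨m * k, by rw [← hr1, hm, hk]; ring⟩
    norm_num at this
  · apply le_antisymm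
    · rw [Ideal.mul_le]
      intro x hx y hy
      obtain ⟨⟨a, ha⟩, ⟨b, hb⟩⟩ := (h𝔠 x).1 hx
      obtain ⟨⟨c, hc⟩, ⟨d, hd⟩⟩ := (h𝔠 y).1 hy
      have hzmem : (a * (y : ℤ × ℤ).1, b * (y : ℤ × ℤ).2) ∈ fiberProdSubring := by
        refine ⟨a * c - b * d, ?_⟩
        simp only
        rw [hc, hd]; ring
      set z : fiberProdSubring := ⟨(a * (y : ℤ × ℤ).1, b * (y : ℤ × ℤ).2), hzmem⟩
      have hz𝔠 : z ∈ 𝔠 := (h𝔠 z).2 ⟨⟨a * c, by simp [z, hc]; ring⟩, ⟨b * d, by simp [z, hd]; ring⟩⟩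
      have hxy : x * y = g2 * z := by
        apply Subtype.ext
        apply Prod.ext
        · show (x : ℤ × ℤ).1 * (y : ℤ × ℤ).1 = 2 * (a * (y : ℤ × ℤ).1)
          rw [ha]; ring
        · show (x : ℤ × ℤ).2 * (y : ℤ × ℤ).2 = 2 * (b * (y : ℤ × ℤ).2)
          rw [hb]; ring
      rw [hxy]
      exact Ideal.mul_mem_mul (Ideal.mem_span_singleton_self g2) hz𝔠
    · refine Ideal.mul_mono ?_ le_rfl
      rw [Ideal.span_le, Set.singleton_subset_iff]
      exact (h𝔠 g2).2 ⟨⟨1, by norm_num⟩, ⟨1, by norm_num⟩⟩
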